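/- Let R be a coupling. Suppose σ₀, σ₁ are states (maps from variables to finite partial maps Index ⇀ V containing [] in their domains) with σ₀ [State(R)] σ₁, and T₀, T₁ : Index ⇀ V are tensors with T₀ [Tensor†(R)] T₁. Then for any variable x, σ₀[x : T₀] [State(R)] σ₁[x : T₁], where σ[x : T] is the state mapping x to the update of σ(x) by T (defined at i by T(i) if i ∈ dom(T), undefined if i ∈ dom(T)↑ \ dom(T), and σ(x)(i) otherwise) and mapping every other variable y to σ(y). -/

import Mathlib

/-- An index: a finite sequence of string-integer pairs with no repeated string. -/
def Index : Type := {l : List (String × ℤ) // (l.map Prod.fst).Nodup}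

/-- The prefix order on indices. -/
def Index.pre (i j : Index) : Prop := i.1 <+: j.1

/-- The empty index. -/
def emptyIdx : Index := ⟨[], by simp⟩

/-- Downward closure of a single index. -/
def down (k : Index) : Set Index := {i | Index.pre i k}

/-- Downward closure of a set of indices. -/
def downSet (L : Set Index) : Set Index := {j | ∃ l ∈ L, Index.pre j l}

/-- Upward closure of a set of indices. -/
def upSet (L : Set Index) : Set Index := {j | ∃ l ∈ L, Index.pre l j}

/-- `m` is the ⊑-greatest element of `S`. -/
def greatestIn (S : Set Index) (m : Index) : Prop := m ∈ S ∧ ∀ s ∈ S, Index.pre s m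

/-- Domain of a partial map represented as an `Option`-valued function. -/
def pdom {V : Type*} (f : Index → Option V) : Set Index := {i | f i ≠ none}

open Classical in
/-- `extend(f)(i) = f(max(dom f ∩ i↓))` when the maximum exists; undefined otherwise. -/
noncomputable def extendFun {V : Type*} (f : Index → Option V) (i : Index) : Option V :=
  if h : ∃ m, greatestIn (pdom f ∩ down i) m then f h.choose else none

open Classical in
/-- The update of `f` by `T`: `T i` on `dom T`, undefined on `(dom T)↑ \ dom T`,
`f i` otherwise. -/
noncomputable def updateMap {V : Type*} (f T : Index → Option V) : Index → Option V :=
  fun i => if i ∈ pdom T then T i else if i ∈ upSet (pdom T) then none else f i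

/-- Pointwise sum of two real tensors. -/
def oplus (T T' : Index → Option ℝ) : Index → Option ℝ := fun i =>
  match T i, T' i with
  | some a, some b => some (a + b)
  | some a, none => some a
  | none, some b => some b
  | none, none => none

/-- A coupling: a partial bijection on indices that agrees on shared strings. -/
def Coupling (R : Index → Index → Prop) : Prop :=
  (∀ i₀ i₁ j, R i₀ j → R i₁ j → i₀ = i₁) ∧
  (∀ i j₀ j₁, R i j₀ → R i j₁ → j₀ = j₁) ∧
  (∀ i₀ i₁, R i₀ i₁ → ∀ (α : String) (v₀ v₁ : ℤ),
    (α, v₀) ∈ i₀.1 → (α, v₁) ∈ i₁.1 → v₀ = v₁)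

/-- The relation `P(R)` on sets of indices induced by a coupling `R`. -/
def PRel (R : Index → Index → Prop) (L₀ L₁ : Set Index) : Prop :=
  ∀ i₀ i₁, R i₀ i₁ →
    ((i₀ ∈ upSet L₀ ↔ i₁ ∈ upSet L₁) ∧
     (i₀ ∈ upSet L₀ → ∃ m₀ m₁, greatestIn (L₀ ∩ down i₀) m₀ ∧
        greatestIn (L₁ ∩ down i₁) m₁ ∧ R m₀ m₁))

/-- The relation `[R ⇀ Δ_V]` / `Tensor_V(R)` on partial maps. -/
def TensorRel {V : Type*} (R : Index → Index → Prop) (T₀ T₁ : Index → Option V) : Prop :=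
  ∀ i₀ i₁, R i₀ i₁ →
    ((i₀ ∈ pdom T₀ ↔ i₁ ∈ pdom T₁) ∧ (i₀ ∈ pdom T₀ → T₀ i₀ = T₁ i₁))

/-- The relation `Tensor†_V(R)` on partial maps (via `extend`). -/
def TensorDagRel {V : Type*} (R : Index → Index → Prop) (T₀ T₁ : Index → Option V) : Prop :=
  ∀ i₀ i₁, R i₀ i₁ →
    ((i₀ ∈ upSet (pdom T₀) ↔ i₁ ∈ upSet (pdom T₁)) ∧
     (i₀ ∈ upSet (pdom T₀) → extendFun T₀ i₀ = extendFun T₁ i₁))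

/-- A well-formed state: each variable stores a finite partial map containing `[]`
in its domain. -/
def WFState {Var V : Type*} (σ : Var → Index → Option V) : Prop :=
  ∀ y, (pdom (σ y)).Finite ∧ emptyIdx ∈ pdom (σ y)

/-- The relation `State(R)` on states. -/
def StateRel {Var V : Type*} (R : Index → Index → Prop)
    (σ₀ σ₁ : Var → Index → Option V) : Prop :=
  ∀ x, TensorDagRel R (σ₀ x) (σ₁ x)

/-- The state update `σ[x : T]`. -/
noncomputable def updState {Var V : Type*} [DecidableEq Var]
    (σ : Var → Index → Option V) (x : Var) (T : Index → Option V) :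
    Var → Index → Option V :=
  fun y => if y = x then updateMap (σ y) T else σ y

/-- An antichain of indices: no two distinct elements are ⊑-comparable. -/
def IsAntichainIdx (A : Set Index) : Prop :=
  ∀ i ∈ A, ∀ j ∈ A, Index.pre i j → i = j

lemma Index.pre_antisymm {i j : Index} (h : i.pre j) (h' : j.pre i) : i = j :=
  Subtype.ext (h.eq_of_length (h.length_le.antisymm h'.length_le))

lemma pre_total_of_pre {s t i : Index} (hs : s.pre i) (ht : t.pre i) :
    s.pre t ∨ t.pre s :=
  List.prefix_or_prefix_of_prefix hs ht

lemma greatest_unique {S : Set Index} {m m' : Index}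
    (h : greatestIn S m) (h' : greatestIn S m') : m = m' :=
  Index.pre_antisymm (h'.2 m h.1) (h.2 m' h'.1)

lemma exists_greatest {S : Set Index} (hS : S.Finite) (hne : S.Nonempty)
    {i : Index} (hsub : S ⊆ down i) : ∃ m, greatestIn S m := by
  obtain ⟨a, ha, hmax'⟩ := hS.exists_maximalFor (fun j => j.1.length) S hne
  have hmax : ∀ s ∈ S, a.1.length ≤ s.1.length → a.1.length = s.1.length :=
    fun s hs h => le_antisymm h (hmax' hs h)
  refine ⟨a, ha, fun s hsin => ?_⟩
  rcases pre_total_of_pre (hsub hsin) (hsub ha) with h | h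
  · exact h
  · have hlen : a.1.length = s.1.length := hmax s hsin h.length_le
    have : a = s := Subtype.ext (List.IsPrefix.eq_of_length h hlen)
    rw [this]
    exact List.prefix_refl _

lemma extendFun_eq_of_greatest {V : Type*} {f : Index → Option V} {i m : Index}
    (hm : greatestIn (pdom f ∩ down i) m) : extendFun f i = f m := by
  have hex : ∃ m, greatestIn (pdom f ∩ down i) m := ⟨m, hm⟩
  rw [extendFun, dif_pos hex]
  exact congrArg f (greatest_unique hex.choose_spec hm)

lemma extendFun_congr {V : Type*} {f g : Index → Option V} {i : Index}
    (hset : pdom f ∩ down i = pdom g ∩ down i)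
    (hval : ∀ s ∈ pdom f ∩ down i, f s = g s) :
    extendFun f i = extendFun g i := by
  unfold extendFun
  by_cases hex : ∃ m, greatestIn (pdom f ∩ down i) m
  · have hex' : ∃ m, greatestIn (pdom g ∩ down i) m := by rw [← hset]; exact hex
    rw [dif_pos hex, dif_pos hex']
    have h1 := hex.choose_spec
    have h2 := hex'.choose_spec
    have : greatestIn (pdom f ∩ down i) hex'.choose := by rw [hset]; exact h2
    rw [greatest_unique h1 this]
    exact hval _ this.1
  · have hex' : ¬ ∃ m, greatestIn (pdom g ∩ down i) m := by rw [← hset]; exact hex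
    rw [dif_neg hex, dif_neg hex']

lemma mem_pdom_updateMap_of_pdom {V : Type*} {f T : Index → Option V} {m : Index}
    (hm : m ∈ pdom T) : updateMap f T m = T m := by
  rw [updateMap, if_pos hm]

/-- Case A: if `i ∈ upSet (pdom T)`, then `extendFun (updateMap f T) i = extendFun T i`. -/
lemma caseA {V : Type*} (f T : Index → Option V) (hT : (pdom T).Finite)
    {i : Index} (hi : i ∈ upSet (pdom T)) :
    i ∈ upSet (pdom (updateMap f T)) ∧
      extendFun (updateMap f T) i = extendFun T i := by
  obtain ⟨t, htd, hti⟩ := hi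
  have hne : (pdom T ∩ down i).Nonempty := ⟨t, htd, hti⟩
  obtain ⟨m, hm⟩ := exists_greatest (hT.inter_of_left _) hne Set.inter_subset_right
  have hmT : m ∈ pdom T := hm.1.1
  have hmU : m ∈ pdom (updateMap f T) := by
    simp only [pdom, Set.mem_setOf_eq, mem_pdom_updateMap_of_pdom hmT]
    exact hmT
  have hgU : greatestIn (pdom (updateMap f T) ∩ down i) m := by
    refine ⟨⟨hmU, hm.1.2⟩, fun s hs => ?_⟩
    by_cases hsT : s ∈ pdom T
    · exact hm.2 s ⟨hsT, hs.2⟩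
    · by_cases hsUp : s ∈ upSet (pdom T)
      · have hnone : updateMap f T s = none := by
          unfold updateMap
          rw [if_neg hsT, if_pos hsUp]
        exact absurd hnone hs.1
      · rcases pre_total_of_pre hs.2 hm.1.2 with h | h
        · exact h
        · exact absurd ⟨m, hmT, h⟩ hsUp
  constructor
  · exact ⟨m, hmU, hm.1.2⟩
  · rw [extendFun_eq_of_greatest hgU, extendFun_eq_of_greatest hm,
      mem_pdom_updateMap_of_pdom hmT]

/-- Case B: if `i ∉ upSet (pdom T)`, then `updateMap f T` behaves like `f` below `i`. -/
lemma caseB {V : Type*} (f T : Index → Option V)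
    {i : Index} (hi : i ∉ upSet (pdom T)) :
    (i ∈ upSet (pdom (updateMap f T)) ↔ i ∈ upSet (pdom f)) ∧
      extendFun (updateMap f T) i = extendFun f i := by
  have hkey : ∀ s : Index, s ∈ down i → updateMap f T s = f s := by
    intro s hsd
    have hsUp : s ∉ upSet (pdom T) := fun ⟨t, ht, hts⟩ =>
      hi ⟨t, ht, hts.trans hsd⟩
    have hsT : s ∉ pdom T := fun h => hsUp ⟨s, h, List.prefix_refl _⟩
    rw [updateMap, if_neg hsT, if_neg hsUp]
  have hset : pdom (updateMap f T) ∩ down i = pdom f ∩ down i := by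
    ext s
    simp only [Set.mem_inter_iff, pdom, Set.mem_setOf_eq, and_congr_left_iff]
    intro hsd
    rw [hkey s hsd]
  refine ⟨?_, extendFun_congr hset fun s hs => hkey s hs.2⟩
  constructor
  · rintro ⟨l, hl, hli⟩
    have : l ∈ pdom (updateMap f T) ∩ down i := ⟨hl, hli⟩
    rw [hset] at this
    exact ⟨l, this.1, hli⟩
  · rintro ⟨l, hl, hli⟩
    have : l ∈ pdom (updateMap f T) ∩ down i := by
      rw [hset]; exact ⟨hl, hli⟩
    exact ⟨l, this.1, hli⟩

theorem stmt12 {Var V : Type*} [DecidableEq Var]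
    (R : Index → Index → Prop) (hR : Coupling R)
    (σ₀ σ₁ : Var → Index → Option V) (hw₀ : WFState σ₀) (hw₁ : WFState σ₁)
    (hs : StateRel R σ₀ σ₁) (T₀ T₁ : Index → Option V)
    (hT₀ : (pdom T₀).Finite) (hT₁ : (pdom T₁).Finite)
    (hT : TensorDagRel R T₀ T₁) (x : Var) :
    StateRel R (updState σ₀ x T₀) (updState σ₁ x T₁) := by
  intro y
  by_cases hyx : y = x
  · subst hyx
    have e0 : updState σ₀ y T₀ y = updateMap (σ₀ y) T₀ := if_pos rfl
    have e1 : updState σ₁ y T₁ y = updateMap (σ₁ y) T₁ := if_pos rfl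
    rw [e0, e1]
    intro i₀ i₁ hi
    obtain ⟨hTiff, hText⟩ := hT i₀ i₁ hi
    by_cases h0 : i₀ ∈ upSet (pdom T₀)
    · have h1 : i₁ ∈ upSet (pdom T₁) := hTiff.mp h0
      obtain ⟨hmem0, hext0⟩ := caseA (σ₀ y) T₀ hT₀ h0
      obtain ⟨hmem1, hext1⟩ := caseA (σ₁ y) T₁ hT₁ h1
      exact ⟨⟨fun _ => hmem1, fun _ => hmem0⟩,
        fun _ => by rw [hext0, hext1]; exact hText h0⟩
    · have h1 : i₁ ∉ upSet (pdom T₁) := fun h => h0 (hTiff.mpr h)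
      obtain ⟨hiff0, hext0⟩ := caseB (σ₀ y) T₀ h0
      obtain ⟨hiff1, hext1⟩ := caseB (σ₁ y) T₁ h1
      obtain ⟨hsiff, hsext⟩ := hs y i₀ i₁ hi
      refine ⟨by rw [hiff0, hiff1]; exact hsiff, fun hup => ?_⟩
      rw [hext0, hext1]
      exact hsext (hiff0.mp hup)
  · simp only [updState, if_neg hyx]
    exact hs y
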